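/- A monomial ideal $I \subseteq K[x_1,\dots,x_n]$ is strongly stable if and only if $I$ is a finite sum of ideals each of which is a finite intersection of powers of linear segment ideals $(x_1,\dots,x_i)$. -/

import Mathlib

open MvPolynomial

noncomputable section
/-- A monomial ideal: an ideal generated by monomials. -/
def IsMonomialIdeal (n : ℕ) (K : Type*) [Field K]
    (I : Ideal (MvPolynomial (Fin n) K)) : Prop :=
  ∃ S : Set (Fin n →₀ ℕ), I = Ideal.span ((fun d => monomial d (1 : K)) '' S)

/-- The linear segment ideal `(x_1, …, x_m)` (`0`-indexed: variables of index `< m`). -/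
def segIdeal (n : ℕ) (K : Type*) [Field K] (m : ℕ) :
    Ideal (MvPolynomial (Fin n) K) :=
  Ideal.span {p | ∃ i : Fin n, (i : ℕ) < m ∧ p = X i}
/-- The strongly stable exchange property. -/
def StronglyStableMoves (n : ℕ) (K : Type*) [Field K]
    (I : Ideal (MvPolynomial (Fin n) K)) : Prop :=
  ∀ d : Fin n →₀ ℕ, monomial d (1 : K) ∈ I →
    ∀ i j : Fin n, i ≤ j → d j ≠ 0 →
      monomial (d - Finsupp.single j 1 + Finsupp.single i 1) (1 : K) ∈ I

/-! ### Auxiliary definitions and lemmas -/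

/-- Weighted degree: sum of the exponents of the first `m` variables. -/
def wdeg (n m : ℕ) (d : Fin n →₀ ℕ) : ℕ :=
  ∑ i ∈ Finset.univ.filter (fun i : Fin n => (i : ℕ) < m), d i

lemma wdeg_add (n m : ℕ) (a b : Fin n →₀ ℕ) :
    wdeg n m (a + b) = wdeg n m a + wdeg n m b := by
  simp [wdeg, Finset.sum_add_distrib]

lemma wdeg_single (n m : ℕ) (a : Fin n) (c : ℕ) :
    wdeg n m (Finsupp.single a c) = if (a : ℕ) < m then c else 0 := by
  simp only [wdeg, Finsupp.single_apply]
  rw [Finset.sum_ite_eq]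
  simp

lemma wdeg_succ (n : ℕ) (k : Fin n) (d : Fin n →₀ ℕ) :
    wdeg n ((k : ℕ) + 1) d = wdeg n k d + d k := by
  have h : (Finset.univ.filter (fun i : Fin n => (i : ℕ) < (k : ℕ) + 1))
      = insert k (Finset.univ.filter (fun i : Fin n => (i : ℕ) < k)) := by
    ext i
    simp only [Finset.mem_filter, Finset.mem_univ, true_and, Finset.mem_insert]
    constructor
    · intro hi
      rcases Nat.lt_succ_iff_lt_or_eq.mp hi with h | h
      · exact Or.inr h
      · exact Or.inl (Fin.ext h)
    · rintro (rfl | hi)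
      · exact Nat.lt_succ_self _
      · exact Nat.lt_succ_of_lt hi
  rw [wdeg, h, Finset.sum_insert (by simp), wdeg, add_comm]

lemma wdeg_zero (n : ℕ) (d : Fin n →₀ ℕ) : wdeg n 0 d = 0 := by
  simp [wdeg]

lemma wdeg_sub_single_add_single (n : ℕ) (d : Fin n →₀ ℕ) (j : Fin n) (hdj : d j ≠ 0) :
    (d - Finsupp.single j 1) + Finsupp.single j 1 = d := by
  ext k
  rcases eq_or_ne j k with rfl | hkj
  · simp only [Finsupp.add_apply, Finsupp.tsub_apply, Finsupp.single_eq_same]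
    omega
  · simp only [Finsupp.add_apply, Finsupp.tsub_apply, Finsupp.single_eq_of_ne' hkj]
    omega

/-- Weighted degrees never decrease along a strongly stable move. -/
lemma wdeg_move_le (n : ℕ) (d : Fin n →₀ ℕ) (i j : Fin n) (hij : i ≤ j) (hdj : d j ≠ 0)
    (m : ℕ) :
    wdeg n m d ≤ wdeg n m (d - Finsupp.single j 1 + Finsupp.single i 1) := by
  have h1 := congrArg (wdeg n m) (wdeg_sub_single_add_single n d j hdj)
  rw [wdeg_add, wdeg_single] at h1
  have h2 : wdeg n m (d - Finsupp.single j 1 + Finsupp.single i 1)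
      = wdeg n m (d - Finsupp.single j 1) + (if (i : ℕ) < m then 1 else 0) := by
    rw [wdeg_add, wdeg_single]
  have h3 : (i : ℕ) ≤ (j : ℕ) := hij
  split_ifs at h1 h2 <;> omega

/-- The ideal of polynomials all of whose monomials satisfy an "upward closed" predicate. -/
def suppIdeal (n : ℕ) (K : Type*) [Field K] (P : (Fin n →₀ ℕ) → Prop)
    (hP : ∀ a b, P b → P (a + b)) : Ideal (MvPolynomial (Fin n) K) where
  carrier := {p | ∀ d ∈ p.support, P d}
  zero_mem' := by simp
  add_mem' := by
    intro p q hp hq d hd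
    rcases Finset.mem_union.mp (Finsupp.support_add hd) with h | h
    · exact hp d h
    · exact hq d h
  smul_mem' := by
    intro c p hp d hd
    have := MvPolynomial.support_mul c p hd
    rw [Finset.mem_add] at this
    obtain ⟨a, ha, b, hb, rfl⟩ := this
    exact hP a b (hp b hb)

lemma mem_suppIdeal {n : ℕ} {K : Type*} [Field K] {P : (Fin n →₀ ℕ) → Prop}
    {hP : ∀ a b, P b → P (a + b)} {p : MvPolynomial (Fin n) K} :
    p ∈ suppIdeal n K P hP ↔ ∀ d ∈ p.support, P d := Iff.rfl

lemma prod_pow_mem_pow {R : Type*} [CommRing R] (J : Ideal R) {ι : Type*} [DecidableEq ι]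
    (s : Finset ι) (x : ι → R) (e : ι → ℕ) (hx : ∀ i ∈ s, x i ∈ J) :
    (∏ i ∈ s, x i ^ e i) ∈ J ^ (∑ i ∈ s, e i) := by
  induction s using Finset.induction with
  | empty => simp [Ideal.one_eq_top]
  | @insert a t ha ih =>
    rw [Finset.prod_insert ha, Finset.sum_insert ha, pow_add]
    exact Ideal.mul_mem_mul (Ideal.pow_mem_pow (hx a (Finset.mem_insert_self a t)) _)
      (ih fun i hi => hx i (Finset.mem_insert_of_mem hi))

/-- Membership in a power of a segment ideal is a weighted-degree condition on the support. -/
lemma mem_segIdeal_pow {n : ℕ} {K : Type*} [Field K] {m e : ℕ} {p : MvPolynomial (Fin n) K} :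
    p ∈ segIdeal n K m ^ e ↔ ∀ d ∈ p.support, e ≤ wdeg n m d := by
  constructor
  · intro hp
    induction e generalizing p with
    | zero => intro d _; exact Nat.zero_le _
    | succ e ih =>
      rw [pow_succ] at hp
      refine Submodule.mul_induction_on hp ?_ ?_
      · intro a ha b hb d hd
        have hb' : ∀ d ∈ b.support, 1 ≤ wdeg n m d := by
          intro d hd
          refine Submodule.span_induction ?_ ?_ ?_ ?_ hb d hd
          · rintro x ⟨i, him, rfl⟩ d hd
            classical
            rw [MvPolynomial.X, MvPolynomial.support_monomial] at hd
            simp only [one_ne_zero, if_false, Finset.mem_singleton] at hd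
            subst hd
            simp only [wdeg, Finsupp.single_apply]
            rw [Finset.sum_ite_eq]
            simp [him]
          · simp
          · intro x y _ _ hx hy d hd
            rcases Finset.mem_union.mp (Finsupp.support_add hd) with h | h
            · exact hx d h
            · exact hy d h
          · intro c x _ hx d hd
            have := MvPolynomial.support_mul c x hd
            rw [Finset.mem_add] at this
            obtain ⟨a1, _, b1, hb1, rfl⟩ := this
            rw [wdeg_add]
            exact le_add_of_le_right (hx b1 hb1)
        have := MvPolynomial.support_mul a b hd
        rw [Finset.mem_add] at this
        obtain ⟨da, hda, db, hdb, rfl⟩ := this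
        rw [wdeg_add]
        have h1 := ih ha da hda
        have h2 := hb' db hdb
        omega
      · intro x y hx hy d hd
        rcases Finset.mem_union.mp (Finsupp.support_add hd) with h | h
        · exact hx d h
        · exact hy d h
  · intro hp
    rw [← p.support_sum_monomial_coeff]
    refine Ideal.sum_mem _ ?_
    intro d hd
    have hwd : e ≤ wdeg n m d := hp d hd
    have hmono : (monomial d (1 : K)) ∈ segIdeal n K m ^ e := by
      have heq : (monomial d (1 : K)) = ∏ i : Fin n, (X i : MvPolynomial (Fin n) K) ^ d i := by
        rw [MvPolynomial.monomial_eq]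
        rw [C_1, one_mul]
        rw [Finsupp.prod]
        refine Finset.prod_subset (Finset.subset_univ _) ?_
        intro i _ hi
        simp only [Finsupp.mem_support_iff, not_not] at hi
        rw [hi, pow_zero]
      rw [heq, ← Finset.prod_filter_mul_prod_filter_not Finset.univ
        (fun i : Fin n => (i : ℕ) < m)]
      have hA : (∏ i ∈ Finset.univ.filter (fun i : Fin n => (i : ℕ) < m),
          (X i : MvPolynomial (Fin n) K) ^ d i) ∈ segIdeal n K m ^ (wdeg n m d) :=
        prod_pow_mem_pow _ _ _ _ (fun i hi =>
          Ideal.subset_span ⟨i, (Finset.mem_filter.mp hi).2, rfl⟩)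
      have := Ideal.mul_mem_right (∏ i ∈ Finset.univ.filter
        (fun i : Fin n => ¬ (i : ℕ) < m), (X i : MvPolynomial (Fin n) K) ^ d i) _ hA
      exact Ideal.pow_le_pow_right hwd this
    have hC : monomial d (MvPolynomial.coeff d p)
        = (C (MvPolynomial.coeff d p)) * monomial d 1 := by
      rw [C_mul_monomial, mul_one]
    rw [hC]
    exact Ideal.mul_mem_left _ _ hmono

lemma idealSum_le {R : Type*} [CommRing R] {ι : Type*} [DecidableEq ι] (t : Finset ι)
    (F : ι → Ideal R) (W : Ideal R) (h : ∀ j ∈ t, F j ≤ W) :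
    (∑ j ∈ t, F j) ≤ W := by
  induction t using Finset.induction with
  | empty => simp
  | @insert a s ha ih =>
    rw [Finset.sum_insert ha, Submodule.add_eq_sup]
    exact sup_le (h a (Finset.mem_insert_self a s))
      (ih fun j hj => h j (Finset.mem_insert_of_mem hj))

lemma le_idealSum {R : Type*} [CommRing R] {ι : Type*} [DecidableEq ι] (t : Finset ι)
    (F : ι → Ideal R) {j : ι} (hj : j ∈ t) :
    F j ≤ ∑ i ∈ t, F i := by
  rw [← Finset.add_sum_erase _ _ hj, Submodule.add_eq_sup]
  exact le_sup_left

/-- Extract a finite generating subset from a set of generators of a f.g. ideal. -/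
lemma exists_finset_span {R : Type*} [CommRing R] {α : Type*} (f : α → R) (S : Set α)
    (hfg : (Ideal.span (f '' S)).FG) :
    ∃ t : Finset α, ↑t ⊆ S ∧ Ideal.span (f '' S) = Ideal.span (f '' ↑t) := by
  classical
  have hcompact := (Submodule.fg_iff_compact _).mp hfg
  have hiSup : Ideal.span (f '' S) = ⨆ a : S, Ideal.span {f a} := by
    rw [show f '' S = Set.range (fun a : S => f a) by
      ext x; simp [Set.range, Set.mem_image]]
    exact Submodule.span_range_eq_iSup
  obtain ⟨u, hu⟩ := CompleteLattice.IsCompactElement.exists_finset_of_le_iSup _ hcompact (fun a : S => Ideal.span {f a})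
    (le_of_eq hiSup)
  refine ⟨u.image Subtype.val, ?_, ?_⟩
  · intro a ha
    simp only [Finset.coe_image, Set.mem_image, Finset.mem_coe] at ha
    obtain ⟨b, _, rfl⟩ := ha
    exact b.2
  · apply le_antisymm
    · refine le_trans hu ?_
      apply iSup_le
      intro a
      apply iSup_le
      intro ha
      apply Ideal.span_mono
      intro x hx
      simp only [Set.mem_singleton_iff] at hx
      subst hx
      refine ⟨(a : α), ?_, rfl⟩
      simp only [Finset.coe_image, Set.mem_image, Finset.mem_coe]
      exact ⟨a, ha, rfl⟩
    · apply Ideal.span_mono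
      apply Set.image_mono
      intro a ha
      simp only [Finset.coe_image, Set.mem_image, Finset.mem_coe] at ha
      obtain ⟨b, _, rfl⟩ := ha
      exact b.2

/-- Key combinatorial lemma: a strongly stable ideal containing `x^d` contains every `x^{d'}`
whose partial-sum vector dominates that of `d`. -/
lemma moves_closure {n : ℕ} {K : Type*} [Field K] {I : Ideal (MvPolynomial (Fin n) K)}
    (hI : StronglyStableMoves n K I) {d d' : Fin n →₀ ℕ}
    (hd : monomial d (1 : K) ∈ I)
    (hle : ∀ k : Fin n, wdeg n ((k : ℕ) + 1) d ≤ wdeg n ((k : ℕ) + 1) d') :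
    monomial d' (1 : K) ∈ I := by
  rcases Nat.eq_zero_or_pos n with hn | hn
  · subst hn
    have : d = d' := by ext k; exact absurd k.2 (by omega)
    rwa [this] at hd
  obtain ⟨last, hlv⟩ : ∃ l : Fin n, (l : ℕ) = n - 1 := ⟨⟨n - 1, by omega⟩, rfl⟩
  have main : ∀ M : ℕ, ∀ d : Fin n →₀ ℕ,
      (∑ k : Fin n, (wdeg n ((k : ℕ) + 1) d' - wdeg n ((k : ℕ) + 1) d)) = M →
      monomial d (1 : K) ∈ I →
      (∀ k : Fin n, wdeg n ((k : ℕ) + 1) d ≤ wdeg n ((k : ℕ) + 1) d') →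
      monomial d' (1 : K) ∈ I := by
    intro M
    induction M using Nat.strong_induction_on with
    | _ M ih =>
    intro d hM hd hle
    by_cases htot : wdeg n ((last : ℕ) + 1) d < wdeg n ((last : ℕ) + 1) d'
    · -- pad by multiplying with the last variable
      set d₂ := d + Finsupp.single last 1 with hd₂def
      have hd₂ : monomial d₂ (1 : K) ∈ I := by
        have h2 : monomial d₂ (1 : K)
            = monomial d (1 : K) * monomial (Finsupp.single last 1) 1 := by
          rw [monomial_mul, one_mul]
        rw [h2]
        exact Ideal.mul_mem_right _ _ hd
      have hwd₂ : ∀ m : ℕ, wdeg n m d₂ = wdeg n m d + (if (last : ℕ) < m then 1 else 0) := by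
        intro m
        rw [hd₂def, wdeg_add, wdeg_single]
      have hle₂ : ∀ k : Fin n, wdeg n ((k : ℕ) + 1) d₂ ≤ wdeg n ((k : ℕ) + 1) d' := by
        intro k
        rw [hwd₂]
        by_cases h : (last : ℕ) < (k : ℕ) + 1
        · have hk : k = last := by
            apply Fin.ext
            have := k.2
            omega
          subst hk
          rw [if_pos h]
          omega
        · rw [if_neg h]
          exact hle k
      refine ih _ ?_ d₂ rfl hd₂ hle₂
      rw [← hM]
      apply Finset.sum_lt_sum
      · intro k _
        have ha := hwd₂ ((k : ℕ) + 1)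
        have hb := hle₂ k
        have hc := hle k
        split_ifs at ha <;> omega
      · refine ⟨last, Finset.mem_univ _, ?_⟩
        have h1 := hwd₂ ((last : ℕ) + 1)
        rw [if_pos (Nat.lt_succ_self _)] at h1
        have := hle₂ last
        omega
    · -- totals are equal
      have htoteq : wdeg n ((last : ℕ) + 1) d = wdeg n ((last : ℕ) + 1) d' :=
        le_antisymm (hle last) (not_lt.mp htot)
      by_cases hall : ∀ k : Fin n, wdeg n ((k : ℕ) + 1) d = wdeg n ((k : ℕ) + 1) d'
      · -- then d = d'
        have hW : ∀ m : ℕ, m ≤ n → wdeg n m d = wdeg n m d' := by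
          intro m hm
          cases m with
          | zero => rw [wdeg_zero, wdeg_zero]
          | succ m => exact hall ⟨m, by omega⟩
        have hdd : d = d' := by
          ext k
          have h1 := wdeg_succ n k d
          have h2 := wdeg_succ n k d'
          have e1 := hW ((k : ℕ) + 1) k.2
          have e2 := hW (k : ℕ) (le_of_lt k.2)
          omega
        rwa [hdd] at hd
      · push_neg at hall
        obtain ⟨k₀, hk₀⟩ := hall
        have hk₀' : wdeg n ((k₀ : ℕ) + 1) d < wdeg n ((k₀ : ℕ) + 1) d' :=
          lt_of_le_of_ne (hle k₀) hk₀
        have hex : ∃ t : ℕ, t < n ∧ wdeg n (t + 1) d < wdeg n (t + 1) d' :=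
          ⟨(k₀ : ℕ), k₀.2, hk₀'⟩
        obtain ⟨i, ⟨hin, histrict⟩, himin'⟩ :
            ∃ t : ℕ, (t < n ∧ wdeg n (t + 1) d < wdeg n (t + 1) d') ∧
              ∀ s, s < t → ¬(s < n ∧ wdeg n (s + 1) d < wdeg n (s + 1) d') :=
          ⟨Nat.find hex, Nat.find_spec hex, fun s hs => Nat.find_min hex hs⟩
        -- i is not the last index
        have hine : i < n - 1 := by
          rcases lt_or_ge i (n - 1) with h | h
          · exact h
          · exfalso
            have hieq : i = n - 1 := by omega
            rw [hieq, ← hlv] at histrict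
            omega
        have hex2 : ∃ t : ℕ, i < t ∧ t < n ∧ wdeg n (t + 1) d = wdeg n (t + 1) d' := by
          refine ⟨n - 1, by omega, by omega, ?_⟩
          rw [← hlv]
          exact htoteq
        obtain ⟨j, ⟨hij, hjn, hjeq⟩, hjmin'⟩ :
            ∃ t : ℕ, (i < t ∧ t < n ∧ wdeg n (t + 1) d = wdeg n (t + 1) d') ∧
              ∀ s, s < t → ¬(i < s ∧ s < n ∧ wdeg n (s + 1) d = wdeg n (s + 1) d') :=
          ⟨Nat.find hex2, Nat.find_spec hex2, fun s hs => Nat.find_min hex2 hs⟩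
        have hstrict : ∀ t, i ≤ t → t < j → wdeg n (t + 1) d < wdeg n (t + 1) d' := by
          intro t hit htj
          rcases eq_or_lt_of_le hit with rfl | h
          · exact histrict
          · have htn : t < n := by omega
            have := hjmin' t htj
            push_neg at this
            exact lt_of_le_of_ne (hle ⟨t, htn⟩) (this h htn)
        obtain ⟨fi, hfiv⟩ : ∃ a : Fin n, (a : ℕ) = i := ⟨⟨i, by omega⟩, rfl⟩
        obtain ⟨fj, hfjv⟩ : ∃ a : Fin n, (a : ℕ) = j := ⟨⟨j, hjn⟩, rfl⟩
        -- d fj > d' fj, in particular d fj ≠ 0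
        have hdfj : d' fj < d fj := by
          have h1 := wdeg_succ n fj d
          have h2 := wdeg_succ n fj d'
          rw [hfjv] at h1 h2
          have h3 : wdeg n j d < wdeg n j d' := by
            have hj1 : j - 1 + 1 = j := by omega
            rw [← hj1]
            exact hstrict (j - 1) (by omega) (by omega)
          omega
        have hdfj0 : d fj ≠ 0 := by omega
        have hd₂ : monomial (d - Finsupp.single fj 1 + Finsupp.single fi 1) (1 : K) ∈ I :=
          hI d hd fi fj (by rw [Fin.le_def, hfiv, hfjv]; omega) hdfj0
        have hsub : (d - Finsupp.single fj 1) + Finsupp.single fj 1 = d := by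
          ext k
          rcases eq_or_ne fj k with rfl | hkj
          · simp only [Finsupp.add_apply, Finsupp.tsub_apply, Finsupp.single_eq_same]
            omega
          · simp only [Finsupp.add_apply, Finsupp.tsub_apply, Finsupp.single_eq_of_ne' hkj]
            omega
        have hwd₂ : ∀ m : ℕ,
            wdeg n m (d - Finsupp.single fj 1 + Finsupp.single fi 1)
              + (if j < m then 1 else 0)
            = wdeg n m d + (if i < m then 1 else 0) := by
          intro m
          have h1 : wdeg n m (d - Finsupp.single fj 1) + (if j < m then 1 else 0)
              = wdeg n m d := by
            have := congrArg (wdeg n m) hsub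
            rw [wdeg_add, wdeg_single, hfjv] at this
            exact this
          have h2 : wdeg n m (d - Finsupp.single fj 1 + Finsupp.single fi 1)
              = wdeg n m (d - Finsupp.single fj 1) + (if i < m then 1 else 0) := by
            rw [wdeg_add, wdeg_single, hfiv]
          omega
        have hle₂ : ∀ k : Fin n,
            wdeg n ((k : ℕ) + 1) (d - Finsupp.single fj 1 + Finsupp.single fi 1)
              ≤ wdeg n ((k : ℕ) + 1) d' := by
          intro k
          have h1 := hwd₂ ((k : ℕ) + 1)
          have h2 := hle k
          by_cases hik : i < (k : ℕ) + 1
          · by_cases hjk : j < (k : ℕ) + 1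
            · rw [if_pos hik, if_pos hjk] at h1
              omega
            · have hs := hstrict (k : ℕ) (by omega) (by omega)
              rw [if_pos hik, if_neg hjk] at h1
              omega
          · have hjk : ¬ j < (k : ℕ) + 1 := by omega
            rw [if_neg hik, if_neg hjk] at h1
            omega
        refine ih _ ?_ _ rfl hd₂ hle₂
        rw [← hM]
        apply Finset.sum_lt_sum
        · intro k _
          have h1 := hwd₂ ((k : ℕ) + 1)
          have h2 := hle k
          have h3 := hle₂ k
          split_ifs at h1 <;> omega
        · refine ⟨fi, Finset.mem_univ _, ?_⟩
          have h1 := hwd₂ ((i : ℕ) + 1)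
          rw [if_pos (Nat.lt_succ_self i), if_neg (by omega : ¬ j < i + 1)] at h1
          rw [hfiv]
          omega
  exact main _ d rfl hd hle

/-- a monomial ideal is strongly stable iff it is a finite sum of ideals,
each of which is a finite intersection of powers of linear segment ideals `(x_1,…,x_h)`,
`1 ≤ h ≤ n`. -/
theorem stronglyStable_iff_sum_of_inter_of_seg_powers
    (n : ℕ) (K : Type*) [Field K]
    (I : Ideal (MvPolynomial (Fin n) K)) (hmon : IsMonomialIdeal n K I) :
    StronglyStableMoves n K I ↔
      ∃ (s : ℕ) (F : Fin s → Ideal (MvPolynomial (Fin n) K)),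
        I = ∑ j : Fin s, F j ∧
        ∀ j : Fin s, ∃ (u : ℕ) (h : Fin u → ℕ) (e : Fin u → ℕ),
          (∀ k, 1 ≤ h k ∧ h k ≤ n) ∧
          F j = ⨅ k : Fin u, segIdeal n K (h k) ^ (e k) := by
  constructor
  · -- forward direction
    intro hSS
    obtain ⟨S, hS⟩ := hmon
    have hfg : (Ideal.span ((fun d => monomial d (1 : K)) '' S)).FG :=
      hS ▸ IsNoetherian.noetherian I
    obtain ⟨t, htS, hIt⟩ := exists_finset_span (fun d => monomial d (1 : K)) S hfg
    have hI2 : I = Ideal.span ((fun d => monomial d (1 : K)) '' ↑t) := hS.trans hIt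
    set g : Fin t.card → (Fin n →₀ ℕ) := fun j => (t.equivFin.symm j : Fin n →₀ ℕ) with hg
    refine ⟨t.card, fun j => ⨅ k : Fin n,
      segIdeal n K ((k : ℕ) + 1) ^ (wdeg n ((k : ℕ) + 1) (g j)), ?_, ?_⟩
    · apply le_antisymm
      · rw [hI2]
        rw [Ideal.span_le]
        rintro x ⟨dd, hdd, rfl⟩
        have hddt : dd ∈ t := hdd
        set j : Fin t.card := t.equivFin ⟨dd, hddt⟩ with hj
        have hgj : g j = dd := by
          show ((t.equivFin.symm (t.equivFin ⟨dd, hddt⟩)) : Fin n →₀ ℕ) = dd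
          rw [Equiv.symm_apply_apply]
        refine le_idealSum Finset.univ _ (Finset.mem_univ j) ?_
        rw [Submodule.mem_iInf]
        intro k
        rw [mem_segIdeal_pow]
        intro d'' hd''
        classical
        rw [MvPolynomial.support_monomial] at hd''
        simp only [one_ne_zero, if_false, Finset.mem_singleton] at hd''
        subst hd''
        rw [hgj]
      · apply idealSum_le
        intro j _
        intro p hp
        rw [Submodule.mem_iInf] at hp
        have hchar : ∀ d'' ∈ p.support, ∀ k : Fin n,
            wdeg n ((k : ℕ) + 1) (g j) ≤ wdeg n ((k : ℕ) + 1) d'' := by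
          intro d'' hd'' k
          exact mem_segIdeal_pow.mp (hp k) d'' hd''
        have hgen : monomial (g j) (1 : K) ∈ I := by
          rw [hI2]
          exact Ideal.subset_span ⟨g j, (t.equivFin.symm j).2, rfl⟩
        rw [← p.support_sum_monomial_coeff]
        refine Ideal.sum_mem _ ?_
        intro d'' hd''
        have hmem : monomial d'' (1 : K) ∈ I :=
          moves_closure hSS hgen (fun k => hchar d'' hd'' k)
        have hC : monomial d'' (MvPolynomial.coeff d'' p)
            = (C (MvPolynomial.coeff d'' p)) * monomial d'' 1 := by
          rw [C_mul_monomial, mul_one]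
        rw [hC]
        exact Ideal.mul_mem_left _ _ hmem
    · intro j
      refine ⟨n, fun k => (k : ℕ) + 1, fun k => wdeg n ((k : ℕ) + 1) (g j),
        fun k => ⟨Nat.succ_le_succ (Nat.zero_le _), Nat.succ_le_of_lt k.2⟩, rfl⟩
  · -- backward direction
    rintro ⟨s, F, hIF, hspec⟩
    choose u hh ee hcond hF using hspec
    set P : (Fin n →₀ ℕ) → Prop :=
      fun dd => ∃ j : Fin s, ∀ k : Fin (u j), ee j k ≤ wdeg n (hh j k) dd with hPdef
    have hP : ∀ a b, P b → P (a + b) := by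
      rintro a b ⟨j, hj⟩
      exact ⟨j, fun k => le_trans (hj k) (by rw [wdeg_add]; omega)⟩
    have hIW : I ≤ suppIdeal n K P hP := by
      rw [hIF]
      apply idealSum_le
      intro j _
      intro p hp
      rw [hF j, Submodule.mem_iInf] at hp
      intro dd hdd
      exact ⟨j, fun k => mem_segIdeal_pow.mp (hp k) dd hdd⟩
    intro d hd i j hij hdj
    have hPd : P d := by
      have := hIW hd
      rw [mem_suppIdeal] at this
      apply this
      classical
      rw [MvPolynomial.support_monomial]
      simp
    obtain ⟨j₀, hj₀⟩ := hPd
    have hmem : monomial (d - Finsupp.single j 1 + Finsupp.single i 1) (1 : K) ∈ F j₀ := by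
      rw [hF j₀, Submodule.mem_iInf]
      intro k
      rw [mem_segIdeal_pow]
      intro dd hdd
      classical
      rw [MvPolynomial.support_monomial] at hdd
      simp only [one_ne_zero, if_false, Finset.mem_singleton] at hdd
      subst hdd
      exact le_trans (hj₀ k) (wdeg_move_le n d i j hij hdj _)
    rw [hIF]
    exact le_idealSum Finset.univ F (Finset.mem_univ j₀) hmem
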